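/- Let ψ = ψ_{i₁}∘ψ_{i₂}∘⋯∘ψ_{iₘ} where each iₖ ∈ {3,8}, and suppose at least one iₖ equals 3 and at least one iₖ equals 8. Then there exists an irrational real number α with 0 < α < 1 such that ψ fixes the Sturmian word s_{α,0}. -/

import Mathlib

/-- A morphism of the free monoid `{0,1}*`, determined by the images of the two
letters (`false` encodes the letter 0, `true` encodes the letter 1). -/
abbrev Morph := Bool → List Bool

/-- The identity morphism. -/
def idm : Morph := fun a => [a]

/-- Composition of morphisms: `(M σ τ)(a) = σ(τ(a))`. -/
def M (σ τ : Morph) : Morph := fun a => (τ a).flatMap σ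

/-- `compAll g [i₁, …, iₙ] = g i₁ ∘ g i₂ ∘ ⋯ ∘ g iₙ` (the identity for `n = 0`). -/
def compAll (g : Bool → Morph) (l : List Bool) : Morph :=
  l.foldr (fun i acc => M (g i) acc) idm

/-- Iterated composition of a morphism with itself. -/
def mpow (σ : Morph) : ℕ → Morph
  | 0 => idm
  | k + 1 => M σ (mpow σ k)

/-- The length-`n` prefix of an infinite word. -/
def wpref (w : ℕ → Bool) (n : ℕ) : List Bool := (List.range n).map w

/-- `σ` fixes the infinite word `w`: for every `n`, the finite word
`σ(w(0))σ(w(1))⋯σ(w(n-1))` is a prefix of `w`. -/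
def Fixes (σ : Morph) (w : ℕ → Bool) : Prop :=
  ∀ n : ℕ, (wpref w n).flatMap σ = wpref w ((wpref w n).flatMap σ).length

/-- The integer value `⌊(n+1)α + ρ⌋ - ⌊nα + ρ⌋` of the Sturmian word `s_{α,ρ}`. -/
noncomputable def sfl (α ρ : ℝ) (n : ℕ) : ℤ :=
  ⌊((n : ℝ) + 1) * α + ρ⌋ - ⌊(n : ℝ) * α + ρ⌋

/-- The integer value `⌈(n+1)α + ρ⌉ - ⌈nα + ρ⌉` of the Sturmian word `s'_{α,ρ}`. -/
noncomputable def scl (α ρ : ℝ) (n : ℕ) : ℤ :=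
  ⌈((n : ℝ) + 1) * α + ρ⌉ - ⌈(n : ℝ) * α + ρ⌉

/-- The Sturmian word `s_{α,ρ}` as an infinite binary word. -/
noncomputable def sw (α ρ : ℝ) : ℕ → Bool := fun n => decide (sfl α ρ n = 1)

/-- The Sturmian word `s'_{α,ρ}` as an infinite binary word. -/
noncomputable def sw' (α ρ : ℝ) : ℕ → Bool := fun n => decide (scl α ρ n = 1)

/-- The characteristic word `c_α = s_{α,α}`. -/
noncomputable def cw (α : ℝ) : ℕ → Bool := sw α α

/-- `ψ₁ : 0 → 01, 1 → 0` (the Fibonacci morphism, `φ₁`). -/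
def psi1 : Morph := fun a => match a with | false => [false, true] | true => [false]

/-- `ψ₃ : 0 → 0, 1 → 01` (the morphism `G`, i.e. `φ₀`). -/
def psi3 : Morph := fun a => match a with | false => [false] | true => [false, true]

/-- `ψ₄ : 0 → 0, 1 → 10`. -/
def psi4 : Morph := fun a => match a with | false => [false] | true => [true, false]

/-- `ψ₇ : 0 → 10, 1 → 1`. -/
def psi7 : Morph := fun a => match a with | false => [true, false] | true => [true]

/-- `ψ₈ : 0 → 01, 1 → 1`. -/
def psi8 : Morph := fun a => match a with | false => [false, true] | true => [true]

/-- Time reversal of a morphism. -/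
def trev (σ : Morph) : Morph := fun a => (σ a).reverse

/-- The exchange morphism `E : 0 → 1, 1 → 0`. -/
def Em : Morph := fun a => [!a]

/-- Generators `φ₀, φ₁` indexed by a bit: `false ↦ φ₀ (= ψ₃)`, `true ↦ φ₁ (= ψ₁)`. -/
def phiGen : Bool → Morph := fun b => match b with | false => psi3 | true => psi1

/-- Generators of `⟨ψ₁, ψ₃⟩`: `false` encodes the index 1 (`ψ₁`),
`true` encodes the index 3 (`ψ₃`). -/
def g13 : Bool → Morph := fun b => match b with | false => psi1 | true => psi3

/-- Generators of `⟨ψ₃, ψ₈⟩`: `false ↦ ψ₃`, `true ↦ ψ₈`. -/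
def g38 : Bool → Morph := fun b => match b with | false => psi3 | true => psi8

/-- Generators of `⟨ψ₄, ψ₇⟩`: `false ↦ ψ₄`, `true ↦ ψ₇`. -/
def g47 : Bool → Morph := fun b => match b with | false => psi4 | true => psi7

/-- The Kepler matrices `K₀ = [[1,0],[1,1]]` and `K₁ = [[0,1],[1,1]]`. -/
def K : Bool → Matrix (Fin 2) (Fin 2) ℕ
  | false => !![1, 0; 1, 1]
  | true => !![0, 1; 1, 1]

/- ======================= auxiliary development ======================= -/
section Aux

open Set

/-! ### The Möbius maps associated to `ψ₃` and `ψ₈` -/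

/-- The map on slopes induced by `ψ₃` (for `false`) and `ψ₈` (for `true`). -/
noncomputable def rmapR : Bool → ℝ → ℝ
  | false => fun a => a / (1 + a)
  | true  => fun a => 1 / (2 - a)

/-- Composite slope map associated to a word in `{ψ₃, ψ₈}`. -/
noncomputable def FlR : List Bool → ℝ → ℝ
  | [] => id
  | i :: l => fun a => rmapR i (FlR l a)

/-- Rational version of `rmapR`. -/
def rmapQ : Bool → ℚ → ℚ
  | false => fun a => a / (1 + a)
  | true  => fun a => 1 / (2 - a)

/-- Rational version of `FlR`. -/
def FlQ : List Bool → ℚ → ℚ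
  | [] => id
  | i :: l => fun a => rmapQ i (FlQ l a)

lemma FlR_cast (l : List Bool) (q : ℚ) : FlR l (q : ℝ) = ((FlQ l q : ℚ) : ℝ) := by
  induction l with
  | nil => rfl
  | cons i l ih =>
      show rmapR i (FlR l (q:ℝ)) = ((rmapQ i (FlQ l q) : ℚ) : ℝ)
      rw [ih]
      cases i <;> simp [rmapR, rmapQ] <;> push_cast <;> ring

/-! ### Prefixes -/

lemma wpref_length (w : ℕ → Bool) (n : ℕ) : (wpref w n).length = n := by
  simp [wpref]

lemma wpref_succ (w : ℕ → Bool) (n : ℕ) : wpref w (n + 1) = wpref w n ++ [w n] := by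
  simp [wpref, List.range_succ]

/-- `σ` maps `w` to `w'` (prefix-wise). -/
def MapsW (σ : Morph) (w w' : ℕ → Bool) : Prop :=
  ∀ n : ℕ, (wpref w n).flatMap σ = wpref w' ((wpref w n).flatMap σ).length

lemma mapsW_of_len {σ : Morph} {w w' : ℕ → Bool} (k : ℕ → ℕ)
    (h : ∀ n, (wpref w n).flatMap σ = wpref w' (k n)) : MapsW σ w w' := by
  intro n
  rw [h n, wpref_length]

lemma flatMap_M (xs : List Bool) (σ τ : Morph) :
    xs.flatMap (M σ τ) = (xs.flatMap τ).flatMap σ := by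
  induction xs with
  | nil => rfl
  | cons a xs ih => simp [M, List.flatMap_cons, List.flatMap_append, ih]

lemma mapsW_comp {σ τ : Morph} {w w' w'' : ℕ → Bool}
    (h1 : MapsW τ w w') (h2 : MapsW σ w' w'') : MapsW (M σ τ) w w'' := by
  intro n
  rw [flatMap_M, h1 n]
  exact h2 _

lemma mapsW_idm (w : ℕ → Bool) : MapsW idm w w := by
  intro n
  have h : (wpref w n).flatMap idm = wpref w n := List.flatMap_singleton' _
  rw [h, wpref_length]

lemma toNat_cast_real {a : ℤ} (h : 0 ≤ a) : ((a.toNat : ℕ) : ℝ) = (a : ℝ) := by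
  exact_mod_cast Int.toNat_of_nonneg h

/-! ### Basic facts about `sfl` -/

lemma sfl0 (α : ℝ) (n : ℕ) : sfl α 0 n = ⌊((n:ℝ) + 1) * α⌋ - ⌊(n:ℝ) * α⌋ := by
  simp [sfl]

lemma sfl_mem {α : ℝ} (h0 : 0 ≤ α) (h1 : α < 1) (n : ℕ) :
    sfl α 0 n = 0 ∨ sfl α 0 n = 1 := by
  have hmono : ⌊(n:ℝ) * α⌋ ≤ ⌊((n:ℝ) + 1) * α⌋ := Int.floor_le_floor (by nlinarith)
  have hub : ⌊((n:ℝ) + 1) * α⌋ < ⌊(n:ℝ) * α⌋ + 2 := by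
    rw [Int.floor_lt]
    push_cast
    nlinarith [Int.lt_floor_add_one ((n:ℝ) * α)]
  rw [sfl0]; omega

lemma sw_eq_false {α : ℝ} {n : ℕ} (h : sfl α 0 n = 0) : sw α 0 n = false := by
  simp [sw, h]

lemma sw_eq_true {α : ℝ} {n : ℕ} (h : sfl α 0 n = 1) : sw α 0 n = true := by
  simp [sw, h]

/-! ### Floor computations for `ψ₃` -/

lemma floor3 {α : ℝ} (h0 : 0 < α) (n : ℕ) (j : ℝ)
    (hj1 : (n:ℝ) + ⌊(n:ℝ) * α⌋ ≤ j) (hj2 : j ≤ (n:ℝ) + ⌊(n:ℝ) * α⌋ + 1) :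
    ⌊j * (α / (1 + α))⌋ = ⌊(n:ℝ) * α⌋ := by
  have h1 : ((⌊(n:ℝ) * α⌋ : ℤ) : ℝ) ≤ (n:ℝ) * α := Int.floor_le _
  have h2 : (n:ℝ) * α < (⌊(n:ℝ) * α⌋ : ℝ) + 1 := Int.lt_floor_add_one _
  have hd : (0:ℝ) < 1 + α := by linarith
  have e : j * (α / (1 + α)) = j * α / (1 + α) := by ring
  rw [Int.floor_eq_iff, e]
  constructor
  · rw [le_div_iff₀ hd]; nlinarith
  · rw [div_lt_iff₀ hd]; push_cast; nlinarith

/-! ### Floor computations for `ψ₈` -/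

lemma floor8a {α : ℝ} (h0 : 0 < α) (h1 : α < 1) (n : ℕ) :
    ⌊(2 * (n:ℝ) - ⌊(n:ℝ) * α⌋) * (1 / (2 - α))⌋ = (n : ℤ) := by
  have hf1 : ((⌊(n:ℝ) * α⌋ : ℤ) : ℝ) ≤ (n:ℝ) * α := Int.floor_le _
  have hf2 : (n:ℝ) * α < (⌊(n:ℝ) * α⌋ : ℝ) + 1 := Int.lt_floor_add_one _
  have hd : (0:ℝ) < 2 - α := by linarith
  have e : (2 * (n:ℝ) - ⌊(n:ℝ) * α⌋) * (1 / (2 - α))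
      = (2 * (n:ℝ) - ⌊(n:ℝ) * α⌋) / (2 - α) := by ring
  rw [Int.floor_eq_iff, e]
  constructor
  · rw [le_div_iff₀ hd]; push_cast; nlinarith
  · rw [div_lt_iff₀ hd]; push_cast; nlinarith

lemma floor8b0 {α : ℝ} (h0 : 0 < α) (h1 : α < 1) (n : ℕ)
    (hs : ⌊((n:ℝ) + 1) * α⌋ = ⌊(n:ℝ) * α⌋) :
    ⌊(2 * (n:ℝ) - ⌊(n:ℝ) * α⌋ + 1) * (1 / (2 - α))⌋ = (n : ℤ) := by
  have hf1 : ((⌊(n:ℝ) * α⌋ : ℤ) : ℝ) ≤ (n:ℝ) * α := Int.floor_le _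
  have hf2 : ((n:ℝ) + 1) * α < (⌊((n:ℝ) + 1) * α⌋ : ℝ) + 1 := Int.lt_floor_add_one _
  rw [hs] at hf2
  have hd : (0:ℝ) < 2 - α := by linarith
  have e : (2 * (n:ℝ) - ⌊(n:ℝ) * α⌋ + 1) * (1 / (2 - α))
      = (2 * (n:ℝ) - ⌊(n:ℝ) * α⌋ + 1) / (2 - α) := by ring
  rw [Int.floor_eq_iff, e]
  constructor
  · rw [le_div_iff₀ hd]; push_cast; nlinarith
  · rw [div_lt_iff₀ hd]; push_cast; nlinarith

lemma floor8b1 {α : ℝ} (h0 : 0 < α) (h1 : α < 1) (n : ℕ)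
    (hs : ⌊((n:ℝ) + 1) * α⌋ = ⌊(n:ℝ) * α⌋ + 1) :
    ⌊(2 * (n:ℝ) - ⌊(n:ℝ) * α⌋ + 1) * (1 / (2 - α))⌋ = (n : ℤ) + 1 := by
  have hf1 : ((⌊(n:ℝ) * α⌋ : ℤ) : ℝ) ≤ (n:ℝ) * α := Int.floor_le _
  have hf2 : (n:ℝ) * α < (⌊(n:ℝ) * α⌋ : ℝ) + 1 := Int.lt_floor_add_one _
  have hf3 : ((⌊((n:ℝ) + 1) * α⌋ : ℤ) : ℝ) ≤ ((n:ℝ) + 1) * α := Int.floor_le _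
  rw [hs] at hf3
  push_cast at hf3
  have hd : (0:ℝ) < 2 - α := by linarith
  have e : (2 * (n:ℝ) - ⌊(n:ℝ) * α⌋ + 1) * (1 / (2 - α))
      = (2 * (n:ℝ) - ⌊(n:ℝ) * α⌋ + 1) / (2 - α) := by ring
  rw [Int.floor_eq_iff, e]
  constructor
  · rw [le_div_iff₀ hd]; push_cast; nlinarith
  · rw [div_lt_iff₀ hd]; push_cast; nlinarith

end Aux

section Maps

lemma maps3_pref {α : ℝ} (h0 : 0 < α) (h1 : α < 1) (n : ℕ) :
    (wpref (sw α 0) n).flatMap psi3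
      = wpref (sw (α / (1 + α)) 0) (n + (⌊(n:ℝ) * α⌋).toNat) := by
  induction n with
  | zero => simp [wpref]
  | succ n ih =>
    have hfnn : 0 ≤ ⌊(n:ℝ) * α⌋ := Int.floor_nonneg.2 (by positivity)
    have hc1 : ((n + 1 : ℕ) : ℝ) = (n:ℝ) + 1 := by push_cast; ring
    have hfl1 : ⌊((n + 1 : ℕ):ℝ) * α⌋ = ⌊((n:ℝ) + 1) * α⌋ := by rw [hc1]
    have hcast : ((n + (⌊(n:ℝ) * α⌋).toNat : ℕ) : ℝ) = (n:ℝ) + ⌊(n:ℝ) * α⌋ := by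
      push_cast [toNat_cast_real hfnn]; ring
    have e0 : ⌊(((n + (⌊(n:ℝ) * α⌋).toNat : ℕ)) : ℝ) * (α/(1+α))⌋ = ⌊(n:ℝ) * α⌋ :=
      floor3 h0 n _ (le_of_eq hcast.symm) (by rw [hcast]; linarith)
    have e1 : ⌊((((n + (⌊(n:ℝ) * α⌋).toNat : ℕ)) : ℝ) + 1) * (α/(1+α))⌋ = ⌊(n:ℝ) * α⌋ :=
      floor3 h0 n _ (by rw [hcast]; linarith) (by rw [hcast])
    have sfl_img0 : sfl (α/(1+α)) 0 (n + (⌊(n:ℝ) * α⌋).toNat) = 0 := by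
      rw [sfl0, e1, e0]; ring
    have hsw0 : sw (α/(1+α)) 0 (n + (⌊(n:ℝ) * α⌋).toNat) = false := sw_eq_false sfl_img0
    rcases sfl_mem h0.le h1 n with hs | hs
    · -- the n-th letter of sw α 0 is 0
      have hf' : ⌊((n:ℝ) + 1) * α⌋ = ⌊(n:ℝ) * α⌋ := by rw [sfl0] at hs; omega
      have hidx : n + 1 + (⌊((n + 1 : ℕ):ℝ) * α⌋).toNat = (n + (⌊(n:ℝ) * α⌋).toNat) + 1 := by
        rw [hfl1, hf']; omega
      rw [wpref_succ, List.flatMap_append, ih, sw_eq_false hs, hidx, wpref_succ, hsw0]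
      simp [psi3]
    · -- the n-th letter of sw α 0 is 1
      have hf' : ⌊((n:ℝ) + 1) * α⌋ = ⌊(n:ℝ) * α⌋ + 1 := by rw [sfl0] at hs; omega
      have hidx : n + 1 + (⌊((n + 1 : ℕ):ℝ) * α⌋).toNat
          = ((n + (⌊(n:ℝ) * α⌋).toNat) + 1) + 1 := by
        rw [hfl1, hf']; omega
      have hcast2 : ((n + (⌊(n:ℝ) * α⌋).toNat + 1 : ℕ) : ℝ)
          = (n:ℝ) + ⌊(n:ℝ) * α⌋ + 1 := by
        push_cast [toNat_cast_real hfnn]; ring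
      have e1' : ⌊(((n + (⌊(n:ℝ) * α⌋).toNat + 1 : ℕ)) : ℝ) * (α/(1+α))⌋ = ⌊(n:ℝ) * α⌋ :=
        floor3 h0 n _ (by rw [hcast2]; linarith) (by rw [hcast2])
      have e2 : ⌊((((n + (⌊(n:ℝ) * α⌋).toNat + 1 : ℕ)) : ℝ) + 1) * (α/(1+α))⌋
          = ⌊(n:ℝ) * α⌋ + 1 := by
        have := floor3 h0 (n+1) ((((n + (⌊(n:ℝ) * α⌋).toNat + 1 : ℕ)) : ℝ) + 1)
          (by rw [hcast2, hfl1, hf']; push_cast; linarith)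
          (by rw [hcast2, hfl1, hf']; push_cast; linarith)
        rw [hfl1, hf'] at this
        exact this
      have sfl_img1 : sfl (α/(1+α)) 0 (n + (⌊(n:ℝ) * α⌋).toNat + 1) = 1 := by
        rw [sfl0, e2, e1']; ring
      have hsw1 : sw (α/(1+α)) 0 (n + (⌊(n:ℝ) * α⌋).toNat + 1) = true := sw_eq_true sfl_img1
      rw [wpref_succ, List.flatMap_append, ih, sw_eq_true hs, hidx, wpref_succ, hsw1,
        wpref_succ, hsw0]
      simp [psi3]

lemma maps8_pref {α : ℝ} (h0 : 0 < α) (h1 : α < 1) (n : ℕ) :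
    (wpref (sw α 0) n).flatMap psi8
      = wpref (sw (1 / (2 - α)) 0) (2 * n - (⌊(n:ℝ) * α⌋).toNat) := by
  induction n with
  | zero => simp [wpref]
  | succ n ih =>
    have hfnn : 0 ≤ ⌊(n:ℝ) * α⌋ := Int.floor_nonneg.2 (by positivity)
    have hfle : ⌊(n:ℝ) * α⌋ ≤ (n : ℤ) := by
      have : ⌊(n:ℝ) * α⌋ ≤ ⌊((n:ℕ) : ℝ)⌋ := Int.floor_le_floor (by nlinarith)
      simpa using this
    have hfleN : (⌊(n:ℝ) * α⌋).toNat ≤ n := by omega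
    have hc1 : ((n + 1 : ℕ) : ℝ) = (n:ℝ) + 1 := by push_cast; ring
    have hfl1 : ⌊((n + 1 : ℕ):ℝ) * α⌋ = ⌊((n:ℝ) + 1) * α⌋ := by rw [hc1]
    have hcast : ((2 * n - (⌊(n:ℝ) * α⌋).toNat : ℕ) : ℝ)
        = 2 * (n:ℝ) - ⌊(n:ℝ) * α⌋ := by
      rw [Nat.cast_sub (by omega)]
      push_cast [toNat_cast_real hfnn]; ring
    have e0 : ⌊(((2 * n - (⌊(n:ℝ) * α⌋).toNat : ℕ)) : ℝ) * (1/(2-α))⌋ = (n : ℤ) := by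
      rw [hcast]; exact floor8a h0 h1 n
    rcases sfl_mem h0.le h1 n with hs | hs
    · -- the n-th letter of sw α 0 is 0; image letters are 0,1
      have hf' : ⌊((n:ℝ) + 1) * α⌋ = ⌊(n:ℝ) * α⌋ := by rw [sfl0] at hs; omega
      have e1 : ⌊((((2 * n - (⌊(n:ℝ) * α⌋).toNat : ℕ)) : ℝ) + 1) * (1/(2-α))⌋ = (n : ℤ) := by
        rw [hcast]; exact floor8b0 h0 h1 n hf'
      have sfl_img0 : sfl (1/(2-α)) 0 (2 * n - (⌊(n:ℝ) * α⌋).toNat) = 0 := by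
        rw [sfl0, e1, e0]; ring
      have hsw0 : sw (1/(2-α)) 0 (2 * n - (⌊(n:ℝ) * α⌋).toNat) = false := sw_eq_false sfl_img0
      have hcast2 : ((2 * n - (⌊(n:ℝ) * α⌋).toNat + 1 : ℕ) : ℝ)
          = 2 * (n:ℝ) - ⌊(n:ℝ) * α⌋ + 1 := by
        rw [Nat.cast_add, hcast]; push_cast; ring
      have e1' : ⌊(((2 * n - (⌊(n:ℝ) * α⌋).toNat + 1 : ℕ)) : ℝ) * (1/(2-α))⌋ = (n : ℤ) := by
        rw [hcast2]; exact floor8b0 h0 h1 n hf'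
      have e2 : ⌊((((2 * n - (⌊(n:ℝ) * α⌋).toNat + 1 : ℕ)) : ℝ) + 1) * (1/(2-α))⌋
          = (n : ℤ) + 1 := by
        have h8 := floor8a h0 h1 (n+1)
        rw [hfl1, hf'] at h8
        have harg : (2 * ((n+1 : ℕ):ℝ) - ⌊(n:ℝ) * α⌋)
            = (((2 * n - (⌊(n:ℝ) * α⌋).toNat + 1 : ℕ)) : ℝ) + 1 := by
          rw [hcast2, hc1]; ring
        rw [harg] at h8
        rw [h8]; push_cast; ring
      have sfl_img1 : sfl (1/(2-α)) 0 (2 * n - (⌊(n:ℝ) * α⌋).toNat + 1) = 1 := by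
        rw [sfl0, e2, e1']; ring
      have hsw1 : sw (1/(2-α)) 0 (2 * n - (⌊(n:ℝ) * α⌋).toNat + 1) = true := sw_eq_true sfl_img1
      have hidx : 2 * (n + 1) - (⌊((n + 1 : ℕ):ℝ) * α⌋).toNat
          = ((2 * n - (⌊(n:ℝ) * α⌋).toNat) + 1) + 1 := by
        rw [hfl1, hf']; omega
      rw [wpref_succ, List.flatMap_append, ih, sw_eq_false hs, hidx, wpref_succ, hsw1,
        wpref_succ, hsw0]
      simp [psi8]
    · -- the n-th letter of sw α 0 is 1; image letter is 1
      have hf' : ⌊((n:ℝ) + 1) * α⌋ = ⌊(n:ℝ) * α⌋ + 1 := by rw [sfl0] at hs; omega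
      have e1 : ⌊((((2 * n - (⌊(n:ℝ) * α⌋).toNat : ℕ)) : ℝ) + 1) * (1/(2-α))⌋
          = (n : ℤ) + 1 := by
        rw [hcast]; exact floor8b1 h0 h1 n hf'
      have sfl_img1 : sfl (1/(2-α)) 0 (2 * n - (⌊(n:ℝ) * α⌋).toNat) = 1 := by
        rw [sfl0, e1, e0]; ring
      have hsw1 : sw (1/(2-α)) 0 (2 * n - (⌊(n:ℝ) * α⌋).toNat) = true := sw_eq_true sfl_img1
      have hidx : 2 * (n + 1) - (⌊((n + 1 : ℕ):ℝ) * α⌋).toNat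
          = (2 * n - (⌊(n:ℝ) * α⌋).toNat) + 1 := by
        rw [hfl1, hf']; omega
      rw [wpref_succ, List.flatMap_append, ih, sw_eq_true hs, hidx, wpref_succ, hsw1]
      simp [psi8]

end Maps

section Assemble

open Set

lemma maps3W {α : ℝ} (h0 : 0 < α) (h1 : α < 1) :
    MapsW psi3 (sw α 0) (sw (rmapR false α) 0) :=
  mapsW_of_len (fun n => n + (⌊(n:ℝ) * α⌋).toNat) (maps3_pref h0 h1)

lemma maps8W {α : ℝ} (h0 : 0 < α) (h1 : α < 1) :
    MapsW psi8 (sw α 0) (sw (rmapR true α) 0) :=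
  mapsW_of_len (fun n => 2 * n - (⌊(n:ℝ) * α⌋).toNat) (maps8_pref h0 h1)

lemma rmapR_memIco (i : Bool) {x : ℝ} (hx : x ∈ Ico (0:ℝ) 1) :
    rmapR i x ∈ Ico (0:ℝ) 1 := by
  obtain ⟨hx0, hx1⟩ := hx
  cases i <;> simp only [rmapR]
  · constructor
    · exact div_nonneg hx0 (by linarith)
    · rw [div_lt_one (by linarith)]; linarith
  · constructor
    · have h2 : (0:ℝ) < 2 - x := by linarith
      positivity
    · rw [div_lt_one (by linarith)]; linarith

lemma rmapR_memIoc (i : Bool) {x : ℝ} (hx : x ∈ Ioc (0:ℝ) 1) :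
    rmapR i x ∈ Ioc (0:ℝ) 1 := by
  obtain ⟨hx0, hx1⟩ := hx
  cases i <;> simp only [rmapR]
  · constructor
    · exact div_pos hx0 (by linarith)
    · rw [div_le_one (by linarith)]; linarith
  · constructor
    · have h2 : (0:ℝ) < 2 - x := by linarith
      positivity
    · rw [div_le_one (by linarith)]; linarith

lemma rmapR_memIoo (i : Bool) {x : ℝ} (hx : x ∈ Ioo (0:ℝ) 1) :
    rmapR i x ∈ Ioo (0:ℝ) 1 := by
  have h1 := rmapR_memIco i (Ioo_subset_Ico_self hx)
  have h2 := rmapR_memIoc i (Ioo_subset_Ioc_self hx)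
  exact ⟨h2.1, h1.2⟩

lemma FlR_memIoo (l : List Bool) {x : ℝ} (hx : x ∈ Ioo (0:ℝ) 1) :
    FlR l x ∈ Ioo (0:ℝ) 1 := by
  induction l with
  | nil => exact hx
  | cons i l ih => exact rmapR_memIoo i ih

lemma FlR_memIco (l : List Bool) {x : ℝ} (hx : x ∈ Ico (0:ℝ) 1) :
    FlR l x ∈ Ico (0:ℝ) 1 := by
  induction l with
  | nil => exact hx
  | cons i l ih => exact rmapR_memIco i ih

lemma FlR_memIoc (l : List Bool) {x : ℝ} (hx : x ∈ Ioc (0:ℝ) 1) :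
    FlR l x ∈ Ioc (0:ℝ) 1 := by
  induction l with
  | nil => exact hx
  | cons i l ih => exact rmapR_memIoc i ih

lemma FlR_append (l1 l2 : List Bool) (x : ℝ) :
    FlR (l1 ++ l2) x = FlR l1 (FlR l2 x) := by
  induction l1 with
  | nil => rfl
  | cons i l ih => show rmapR i (FlR (l ++ l2) x) = _; rw [ih]; rfl

lemma mapsW_compAll (l : List Bool) {α : ℝ} (h : α ∈ Ioo (0:ℝ) 1) :
    MapsW (compAll g38 l) (sw α 0) (sw (FlR l α) 0) := by
  induction l with
  | nil => exact mapsW_idm _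
  | cons i l ih =>
    have hmem := FlR_memIoo l h
    have h2 : MapsW (g38 i) (sw (FlR l α) 0) (sw (rmapR i (FlR l α)) 0) := by
      cases i
      · exact maps3W hmem.1 hmem.2
      · exact maps8W hmem.1 hmem.2
    exact mapsW_comp ih h2

/-! ### Existence of an interior fixed point -/

lemma contOn_rmapR (i : Bool) : ContinuousOn (rmapR i) (Icc (0:ℝ) 1) := by
  cases i <;> simp only [rmapR]
  · exact ContinuousOn.div (by fun_prop) (by fun_prop)
      (fun x hx => by have := hx.1; intro h; linarith)
  · exact ContinuousOn.div (by fun_prop) (by fun_prop)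
      (fun x hx => by have := hx.2; intro h; linarith)

lemma rmapR_memIcc (i : Bool) {x : ℝ} (hx : x ∈ Icc (0:ℝ) 1) :
    rmapR i x ∈ Icc (0:ℝ) 1 := by
  obtain ⟨hx0, hx1⟩ := hx
  cases i <;> simp only [rmapR]
  · constructor
    · exact div_nonneg hx0 (by linarith)
    · rw [div_le_one (by linarith)]; linarith
  · constructor
    · have h2 : (0:ℝ) < 2 - x := by linarith
      positivity
    · rw [div_le_one (by linarith)]; linarith

lemma FlR_memIcc (l : List Bool) {x : ℝ} (hx : x ∈ Icc (0:ℝ) 1) :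
    FlR l x ∈ Icc (0:ℝ) 1 := by
  induction l with
  | nil => exact hx
  | cons i l ih => exact rmapR_memIcc i ih

lemma contOn_FlR (l : List Bool) : ContinuousOn (FlR l) (Icc (0:ℝ) 1) := by
  induction l with
  | nil => exact continuousOn_id
  | cons i l ih =>
    exact (contOn_rmapR i).comp ih (fun x hx => FlR_memIcc l hx)

lemma FlR_zero_mem (l : List Bool) (h8 : true ∈ l) : FlR l 0 ∈ Ioo (0:ℝ) 1 := by
  obtain ⟨s, t, rfl⟩ := List.append_of_mem h8
  rw [FlR_append]
  have h1 : FlR t 0 ∈ Ico (0:ℝ) 1 := FlR_memIco t (by constructor <;> norm_num)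
  have h2 : FlR (true :: t) 0 ∈ Ioo (0:ℝ) 1 := by
    show rmapR true (FlR t 0) ∈ Ioo (0:ℝ) 1
    obtain ⟨hx0, hx1⟩ := h1
    constructor
    · show 0 < 1 / (2 - FlR t 0)
      have h2 : (0:ℝ) < 2 - FlR t 0 := by linarith
      positivity
    · show 1 / (2 - FlR t 0) < 1
      rw [div_lt_one (by linarith)]; linarith
  exact FlR_memIoo s h2

lemma FlR_one_mem (l : List Bool) (h3 : false ∈ l) : FlR l 1 ∈ Ioo (0:ℝ) 1 := by
  obtain ⟨s, t, rfl⟩ := List.append_of_mem h3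
  rw [FlR_append]
  have h1 : FlR t 1 ∈ Ioc (0:ℝ) 1 := FlR_memIoc t (by constructor <;> norm_num)
  have h2 : FlR (false :: t) 1 ∈ Ioo (0:ℝ) 1 := by
    show rmapR false (FlR t 1) ∈ Ioo (0:ℝ) 1
    obtain ⟨hx0, hx1⟩ := h1
    constructor
    · show 0 < FlR t 1 / (1 + FlR t 1); positivity
    · show FlR t 1 / (1 + FlR t 1) < 1
      rw [div_lt_one (by linarith)]; linarith
  exact FlR_memIoo s h2

/-! ### Rational points are not fixed -/

lemma rmapQ_den {q : ℚ} (h0 : 0 < q) (h1 : q < 1) (i : Bool) :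
    q.den < (rmapQ i q).den ∧ 0 < rmapQ i q ∧ rmapQ i q < 1 := by
  have hb : 0 < (q.den : ℤ) := by exact_mod_cast q.pos
  have ha : 0 < q.num := Rat.num_pos.2 h0
  have hab : q.num < (q.den : ℤ) := by
    have h := h1
    rw [← Rat.num_div_den q, div_lt_one (by exact_mod_cast hb)] at h
    exact_mod_cast h
  have hbQ : (0:ℚ) < (q.den : ℚ) := by exact_mod_cast hb
  have hA : ((q.num.natAbs : ℤ)) = q.num := Int.natAbs_of_nonneg ha.le
  have hApos : 0 < q.num.natAbs := by omega
  have hsub : q.num.natAbs < q.den := by omega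
  have hnum : (q.num : ℚ) = q * (q.den : ℚ) :=
    (div_eq_iff (ne_of_gt hbQ)).mp (Rat.num_div_den q)
  have hAQ : ((q.num.natAbs : ℕ) : ℚ) = q * (q.den : ℚ) := by
    rw [show ((q.num.natAbs : ℕ) : ℚ) = ((q.num.natAbs : ℤ) : ℚ) from
      (Int.cast_natCast _).symm, hA, hnum]
  refine ⟨?_, ?_, ?_⟩
  · cases i
    · -- q/(1+q) has value q.num / (q.num.natAbs + q.den)
      have hcop : (q.num.natAbs).Coprime (q.num.natAbs + q.den) := by
        have := q.reduced
        simpa [Nat.coprime_add_self_right] using this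
      have hden : q.num.natAbs + q.den ≠ 0 := by omega
      have hABQ : ((q.num.natAbs + q.den : ℕ) : ℚ) = q * (q.den:ℚ) + (q.den:ℚ) := by
        push_cast [← hAQ]
        ring
      have hval : (Rat.mk' q.num (q.num.natAbs + q.den) hden hcop : ℚ)
          = rmapQ false q := by
        rw [Rat.mk_eq_divInt, Rat.divInt_eq_div]
        show (q.num : ℚ) / ((q.num.natAbs + q.den : ℕ) : ℚ) = q / (1 + q)
        rw [hABQ, hnum, div_eq_div_iff (by nlinarith) (by nlinarith)]
        ring
      rw [← hval]
      show q.den < q.num.natAbs + q.den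
      omega
    · -- 1/(2-q) has value q.den / (2*q.den - q.num.natAbs)
      have hcop : ((q.den : ℤ).natAbs).Coprime (2 * q.den - q.num.natAbs) := by
        simp only [Int.natAbs_natCast]
        have hred : (q.num.natAbs).Coprime q.den := q.reduced
        set d := Nat.gcd q.den (2 * q.den - q.num.natAbs) with hd
        have h1' : d ∣ q.den := Nat.gcd_dvd_left _ _
        have h2' : d ∣ 2 * q.den - q.num.natAbs := Nat.gcd_dvd_right _ _
        have h3' : d ∣ 2 * q.den := Dvd.dvd.mul_left h1' 2
        have h4' : d ∣ q.num.natAbs := by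
          have := Nat.dvd_sub h3' h2'
          rwa [Nat.sub_sub_self (by omega)] at this
        have h5' : d ∣ Nat.gcd q.num.natAbs q.den := Nat.dvd_gcd h4' h1'
        rw [hred.gcd_eq_one] at h5'
        exact Nat.dvd_one.mp h5'
      have hden : 2 * q.den - q.num.natAbs ≠ 0 := by omega
      have hDQ : ((2 * q.den - q.num.natAbs : ℕ) : ℚ)
          = 2 * (q.den:ℚ) - q * (q.den:ℚ) := by
        rw [Nat.cast_sub (by omega), hAQ]
        push_cast
        ring
      have hval : (Rat.mk' (q.den : ℤ) (2 * q.den - q.num.natAbs) hden hcop : ℚ)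
          = rmapQ true q := by
        rw [Rat.mk_eq_divInt, Rat.divInt_eq_div]
        show ((q.den : ℤ) : ℚ) / ((2 * q.den - q.num.natAbs : ℕ) : ℚ) = 1 / (2 - q)
        rw [hDQ, show ((q.den : ℤ) : ℚ) = (q.den : ℚ) from Int.cast_natCast _,
          div_eq_div_iff (by nlinarith) (by nlinarith)]
        ring
      rw [← hval]
      show q.den < 2 * q.den - q.num.natAbs
      omega
  · cases i
    · exact div_pos h0 (by linarith)
    · show 0 < 1 / (2 - q)
      have h2 : (0:ℚ) < 2 - q := by linarith
      positivity
  · cases i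
    · show q / (1 + q) < 1
      rw [div_lt_one (by linarith)]; linarith
    · show 1 / (2 - q) < 1
      rw [div_lt_one (by linarith)]; linarith

lemma FlQ_den (l : List Bool) {q : ℚ} (h0 : 0 < q) (h1 : q < 1) :
    (0 < FlQ l q ∧ FlQ l q < 1) ∧ q.den ≤ (FlQ l q).den ∧
      (l ≠ [] → q.den < (FlQ l q).den) := by
  induction l with
  | nil => exact ⟨⟨h0, h1⟩, le_refl _, fun h => absurd rfl h⟩
  | cons i l ih =>
    obtain ⟨⟨hx0, hx1⟩, hle, _⟩ := ih
    have h := rmapQ_den hx0 hx1 i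
    exact ⟨⟨h.2.1, h.2.2⟩, le_of_lt (lt_of_le_of_lt hle h.1),
      fun _ => lt_of_le_of_lt hle h.1⟩

end Assemble


/-- For every `ψ = ψ_{i₁} ∘ ⋯ ∘ ψ_{iₘ}` with all `iₖ ∈ {3,8}`
(here `false` encodes `ψ₃` and `true` encodes `ψ₈`), containing at least one
`ψ₃` and at least one `ψ₈`, there is an irrational `α ∈ (0,1)` such that `ψ`
fixes `s_{α,0}`. -/
theorem psi38_fixes_some_s_alpha_zero (l : List Bool) (h3 : false ∈ l) (h8 : true ∈ l) :
    ∃ α : ℝ, Irrational α ∧ 0 < α ∧ α < 1 ∧ Fixes (compAll g38 l) (sw α 0) := by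
  have hg : ContinuousOn (fun x => FlR l x - x) (Set.Icc (0:ℝ) 1) :=
    (contOn_FlR l).sub continuousOn_id
  have h10 : FlR l 1 - 1 < 0 := by have := (FlR_one_mem l h3).2; linarith
  have h00 : 0 < FlR l 0 - 0 := by have := (FlR_zero_mem l h8).1; linarith
  obtain ⟨α, hα, hgα⟩ :=
    intermediate_value_Ioo' (by norm_num : (0:ℝ) ≤ 1) hg ⟨h10, h00⟩
  have hfix : FlR l α = α := by
    have := hgα
    simp only at this
    linarith
  refine ⟨α, ?_, hα.1, hα.2, ?_⟩
  · rintro ⟨q, rfl⟩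
    have hq0 : 0 < q := by exact_mod_cast hα.1
    have hq1 : q < 1 := by exact_mod_cast hα.2
    have hcast : ((FlQ l q : ℚ) : ℝ) = ((q : ℚ) : ℝ) := by rw [← FlR_cast, hfix]
    have heq : FlQ l q = q := by exact_mod_cast hcast
    have hden := (FlQ_den l hq0 hq1).2.2 (List.ne_nil_of_mem h3)
    rw [heq] at hden
    exact lt_irrefl _ hden
  · have h := mapsW_compAll l hα
    rw [hfix] at h
    exact h
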